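/- Let V be a Γ-graded vector space with commutation factor ε and let 𝓡(V) be the space of quadrilinear maps R : V⁴ → k satisfying R(A,B,C,D) = −ε(A,B)R(B,A,C,D) and R(A,B,C,D) = ε(A+B,C+D)R(C,D,A,B). Define the Bianchi map β : 𝓡(V) → 𝓡(V) by β(R)(A,B,C,D) := R(A,B,C,D) + ε(A,B+C)R(B,C,A,D) + ε(A+B,C)R(C,A,B,D). Then (1/3)β is the projection of 𝓡(V) onto Alt⁴_ε(V) parallel to Ker(β); in particular β(R) is ε-alternating for all R ∈ 𝓡(V), and β(R) = 3R whenever R is ε-alternating. -/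

import Mathlib

/-- A commutation factor of an abelian group `Γ` with values in `k`. -/
structure CommutationFactor (k Γ : Type*) [Field k] [AddCommGroup Γ] where
  ε : Γ → Γ → k
  mul_symm : ∀ a b, ε a b * ε b a = 1
  add_fst : ∀ a b c, ε (a + b) c = ε a c * ε b c
  add_snd : ∀ a b c, ε a (b + c) = ε a b * ε a c

/-- The value of the Bianchi map `β(R)` on homogeneous vectors of degrees
`a`, `b`, `c` (and arbitrary fourth argument). -/
def bianchiVal {k Γ V : Type*} [Field k] [AddCommGroup Γ]
    [AddCommGroup V] [Module k V]
    (ε : Γ → Γ → k) (R : V →ₗ[k] V →ₗ[k] V →ₗ[k] V →ₗ[k] k)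
    (a b c : Γ) (A B C D : V) : k :=
  R A B C D + ε a (b + c) * R B C A D + ε (a + b) c * R C A B D

/-- `(1/3)β` is the projection of `𝓡(V)` onto `Alt⁴_ε(V)` parallel to
`Ker β`: `β(R)` is ε-alternating, `β(β(R)) = 3 β(R)`, and `β(R) = 3R`
whenever `R` is ε-alternating. -/
theorem stmt14 {k Γ V : Type*} [Field k] [AddCommGroup Γ] [DecidableEq Γ]
    [AddCommGroup V] [Module k V]
    (h2 : (2 : k) ≠ 0) (h3 : (3 : k) ≠ 0)
    (E : CommutationFactor k Γ)
    (𝒱 : Γ → Submodule k V) [DirectSum.Decomposition 𝒱]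
    (R : V →ₗ[k] V →ₗ[k] V →ₗ[k] V →ₗ[k] k)
    (hR1 : ∀ a b c d : Γ, ∀ A ∈ 𝒱 a, ∀ B ∈ 𝒱 b, ∀ C ∈ 𝒱 c, ∀ D ∈ 𝒱 d,
      R A B C D = -(E.ε a b) * R B A C D)
    (hR2 : ∀ a b c d : Γ, ∀ A ∈ 𝒱 a, ∀ B ∈ 𝒱 b, ∀ C ∈ 𝒱 c, ∀ D ∈ 𝒱 d,
      R A B C D = E.ε (a + b) (c + d) * R C D A B) :
    (∀ a b c d : Γ, ∀ A ∈ 𝒱 a, ∀ B ∈ 𝒱 b, ∀ C ∈ 𝒱 c, ∀ D ∈ 𝒱 d,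
      (bianchiVal E.ε R a b c A B C D
          = -(E.ε a b) * bianchiVal E.ε R b a c B A C D) ∧
      (bianchiVal E.ε R a b c A B C D
          = -(E.ε b c) * bianchiVal E.ε R a c b A C B D) ∧
      (bianchiVal E.ε R a b c A B C D
          = -(E.ε c d) * bianchiVal E.ε R a b d A B D C)) ∧
    (∀ a b c d : Γ, ∀ A ∈ 𝒱 a, ∀ B ∈ 𝒱 b, ∀ C ∈ 𝒱 c, ∀ D ∈ 𝒱 d,
      bianchiVal E.ε R a b c A B C D
        + E.ε a (b + c) * bianchiVal E.ε R b c a B C A D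
        + E.ε (a + b) c * bianchiVal E.ε R c a b C A B D
      = 3 * bianchiVal E.ε R a b c A B C D) ∧
    ((∀ a b c d : Γ, ∀ A ∈ 𝒱 a, ∀ B ∈ 𝒱 b, ∀ C ∈ 𝒱 c, ∀ D ∈ 𝒱 d,
        (R A B C D = -(E.ε a b) * R B A C D) ∧
        (R A B C D = -(E.ε b c) * R A C B D) ∧
        (R A B C D = -(E.ε c d) * R A B D C)) →
      ∀ a b c d : Γ, ∀ A ∈ 𝒱 a, ∀ B ∈ 𝒱 b, ∀ C ∈ 𝒱 c, ∀ D ∈ 𝒱 d,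
        bianchiVal E.ε R a b c A B C D = 3 * R A B C D) := by
  obtain ⟨ε, hm, hf, hs⟩ := E
  dsimp only at hR1 hR2 ⊢
  have hne : ∀ u v : Γ, ε u v ≠ 0 := fun u v => left_ne_zero_of_mul_eq_one (hm u v)
  have hinv : ∀ u v : Γ, ε v u = (ε u v)⁻¹ :=
    fun u v => eq_inv_of_mul_eq_one_right (hm u v)
  have swap34 : ∀ a b c d : Γ, ∀ A ∈ 𝒱 a, ∀ B ∈ 𝒱 b, ∀ C ∈ 𝒱 c, ∀ D ∈ 𝒱 d,
      R A B C D = -(ε c d) * R A B D C := by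
    intro a b c d A hA B hB C hC D hD
    rw [hR2 a b c d A hA B hB C hC D hD, hR1 c d a b C hC D hD A hA B hB,
        hR2 d c a b D hD C hC A hA B hB]
    simp only [hf, hs, hinv a c, hinv a d, hinv b c, hinv b d]
    field_simp [hne a b, hne a c, hne b c, hne a d, hne b d, hne c d]
  refine ⟨?_, ?_, ?_⟩
  · intro a b c d A hA B hB C hC D hD
    refine ⟨?_, ?_, ?_⟩
    · simp only [bianchiVal]
      rw [hR1 b a c d B hB A hA C hC D hD, hR1 a c b d A hA C hC B hB D hD,
          hR1 c b a d C hC B hB A hA D hD]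
      simp only [hf, hs, hinv a b, hinv a c, hinv b c]
      field_simp [hne a b, hne a c, hne b c, hne a d, hne b d, hne c d]
      ring
    · simp only [bianchiVal]
      rw [hR1 b a c d B hB A hA C hC D hD, hR1 a c b d A hA C hC B hB D hD,
          hR1 c b a d C hC B hB A hA D hD]
      simp only [hf, hs, hinv a b, hinv a c, hinv b c]
      field_simp [hne a b, hne a c, hne b c, hne a d, hne b d, hne c d]
      ring
    · simp only [bianchiVal]
      rw [swap34 a b d c A hA B hB D hD C hC,
          hR2 b d a c B hB D hD A hA C hC, hR1 a c b d A hA C hC B hB D hD,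
          hR2 d a b c D hD A hA B hB C hC, swap34 b c d a B hB C hC D hD A hA]
      simp only [hf, hs]
      linear_combination
        (-(R A B C D) - ε a b * ε a c * R B C A D - ε a c * ε b c * R C A B D) * hm c d
        + (-(ε c d * ε d c) * ε a b * ε a c * R B C A D
            - (ε c d * ε d c) * (ε a b * ε b a) * ε a c * ε b c * R C A B D) * hm a d
        + (-(ε c d * ε d c) * (ε a d * ε d a) * ε a b * ε a c * R B C A D) * hm b d
        + (-(ε c d * ε d c) * ε a c * ε b c * R C A B D) * hm a b
  · intro a b c d A hA B hB C hC D hD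
    simp only [bianchiVal, hf, hs, hinv a b, hinv a c, hinv b c]
    field_simp [hne a b, hne a c, hne b c, hne a d, hne b d, hne c d]
    ring
  · intro H a b c d A hA B hB C hC D hD
    simp only [bianchiVal]
    rw [(H b c a d B hB C hC A hA D hD).2.1, (H b a c d B hB A hA C hC D hD).1,
        (H c a b d C hC A hA B hB D hD).1, (H a c b d A hA C hC B hB D hD).2.1]
    simp only [hf, hs, hinv a b, hinv a c, hinv b c]
    field_simp [hne a b, hne a c, hne b c, hne a d, hne b d, hne c d]
    ring
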